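/- Let n, r, k be natural numbers with r ≥ 2, n ≥ r(k-1), and r - 1 a prime power. Then there is an r-colouring of E(K_n) in which every monochromatic k-connected subgraph has at most (n-k+1)/(r-1) + r vertices; moreover if (r-1)² divides n - r(k-1), the bound (n-k+1)/(r-1) holds. -/

import Mathlib

set_option linter.unusedSectionVars false
set_option linter.unusedSectionVars false

namespace S14
variable {F : Type*} [Field F] [DecidableEq F]

def part (t : Option F) (P : F × F) : F :=
  match t with
  | none => P.1
  | some s => P.2 - s * P.1

def cls (P Q : F × F) : Option F :=
  if P.1 = Q.1 then none else some ((P.2 - Q.2) / (P.1 - Q.1))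

lemma cls_symm (P Q : F × F) : cls P Q = cls Q P := by
  unfold cls
  by_cases h : P.1 = Q.1
  · rw [if_pos h, if_pos h.symm]
  · rw [if_neg h, if_neg (Ne.symm h)]
    congr 1
    rw [div_eq_div_iff (sub_ne_zero.mpr h) (sub_ne_zero.mpr (Ne.symm h))]
    ring

lemma part_eq_of_cls {P Q : F × F} {t : Option F} (h : cls P Q = t) :
    part t P = part t Q := by
  unfold cls at h
  by_cases hx : P.1 = Q.1
  · rw [if_pos hx] at h; subst h; simpa [part] using hx
  · rw [if_neg hx] at h; subst h
    have hne : P.1 - Q.1 ≠ 0 := sub_ne_zero.mpr hx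
    simp only [part]
    field_simp
    ring

def fiberMap (t : Option F) (P : F × F) : F :=
  match t with
  | none => P.2
  | some _ => P.1

lemma fiberMap_inj {t : Option F} {c : F} {P Q : F × F}
    (hP : part t P = c) (hQ : part t Q = c) (h : fiberMap t P = fiberMap t Q) : P = Q := by
  cases t with
  | none =>
      simp only [part] at hP hQ
      simp only [fiberMap] at h
      exact Prod.ext (hP.trans hQ.symm) h
  | some s =>
      simp only [part] at hP hQ
      simp only [fiberMap] at h
      refine Prod.ext h ?_
      have := hP.trans hQ.symm
      rw [h] at this
      exact sub_left_inj.mp this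

/-- vertex map -/
def pt (n r K Q : ℕ) (hQ : 0 < Q) (e2 : Fin Q ≃ F × F) (v : Fin n) : (Fin r) ⊕ (F × F) :=
  if h : (v : ℕ) < r * K then
    Sum.inl ⟨(v : ℕ) / K, by
      have hK : 0 < K := by
        rcases Nat.eq_zero_or_pos K with h0 | h0
        · subst h0; simp at h
        · exact h0
      exact (Nat.div_lt_iff_lt_mul hK).mpr h⟩
  else Sum.inr (e2 ⟨((v : ℕ) - r * K) % Q, Nat.mod_lt _ hQ⟩)

lemma pt_inl {n r K Q : ℕ} {hQ : 0 < Q} {e2 : Fin Q ≃ F × F} {v : Fin n} {i : Fin r}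
    (h : pt n r K Q hQ e2 v = Sum.inl i) :
    (v : ℕ) < r * K ∧ (v : ℕ) / K = (i : ℕ) := by
  unfold pt at h
  split at h
  · next hlt => exact ⟨hlt, congrArg Fin.val (Sum.inl.inj h)⟩
  · exact absurd h (by simp)

lemma pt_inr {n r K Q : ℕ} {hQ : 0 < Q} {e2 : Fin Q ≃ F × F} {v : Fin n} {P : F × F}
    (h : pt n r K Q hQ e2 v = Sum.inr P) :
    ¬ ((v : ℕ) < r * K) ∧ P = e2 ⟨((v : ℕ) - r * K) % Q, Nat.mod_lt _ hQ⟩ := by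
  unfold pt at h
  split at h
  · exact absurd h (by simp)
  · next hlt => exact ⟨hlt, (Sum.inr.inj h).symm⟩

def gcol {n r : ℕ} (ιr : Fin r ≃ Option F) (ptf : Fin n → (Fin r) ⊕ (F × F))
    (u v : Fin n) : Fin r :=
  match ptf u, ptf v with
  | .inl j, .inl j' => min j j'
  | .inl j, .inr _ => j
  | .inr _, .inl j => j
  | .inr P, .inr Q => ιr.symm (cls P Q)

lemma gcol_symm {n r : ℕ} (ιr : Fin r ≃ Option F) (ptf : Fin n → (Fin r) ⊕ (F × F))
    (u v : Fin n) : gcol ιr ptf u v = gcol ιr ptf v u := by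
  unfold gcol
  rcases ptf u with j | P <;> rcases ptf v with j' | Q <;> simp [min_comm, cls_symm]

lemma gcol_eq {n r : ℕ} {ιr : Fin r ≃ Option F} {ptf : Fin n → (Fin r) ⊕ (F × F)}
    {u v : Fin n} {i : Fin r} (hu : ptf u ≠ .inl i) (hv : ptf v ≠ .inl i)
    (h : gcol ιr ptf u v = i) :
    ∃ P Q, ptf u = .inr P ∧ ptf v = .inr Q ∧ part (ιr i) P = part (ιr i) Q := by
  unfold gcol at h
  rcases hptu : ptf u with j | P <;> rcases hptv : ptf v with j' | Q <;>
    rw [hptu, hptv] at h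
  · exfalso
    rcases min_cases j j' with ⟨he, _⟩ | ⟨he, _⟩
    · exact hu (by rw [hptu, he.symm.trans h])
    · exact hv (by rw [hptv, he.symm.trans h])
  · exact absurd (hptu.trans (congrArg Sum.inl h)) hu
  · exact absurd (hptv.trans (congrArg Sum.inl h)) hv
  · refine ⟨P, Q, rfl, rfl, part_eq_of_cls ?_⟩
    rw [← h, Equiv.apply_symm_apply]

lemma CiBound (n r K Q : ℕ) (hQ : 0 < Q) (e2 : Fin Q ≃ F × F) (i : Fin r) :
    {v : Fin n | pt n r K Q hQ e2 v = Sum.inl i}.ncard ≤ K := by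
  rcases Nat.eq_zero_or_pos K with hK | hK
  · subst hK
    have hempty : {v : Fin n | pt n r 0 Q hQ e2 v = Sum.inl i} = ∅ := by
      ext v
      simp only [Set.mem_setOf_eq, Set.mem_empty_iff_false, iff_false]
      intro h
      have := (pt_inl h).1
      simp at this
    rw [hempty, Set.ncard_empty]
  · have h := Set.ncard_le_ncard_of_injOn (s := {v : Fin n | pt n r K Q hQ e2 v = Sum.inl i}) (t := (Set.Iio K : Set ℕ))
      (fun v : Fin n => (v : ℕ) % K)
      (fun v _ => Set.mem_Iio.mpr (Nat.mod_lt _ hK))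
      (by
        intro u hu v hv h
        obtain ⟨hu1, hu2⟩ := pt_inl hu
        obtain ⟨hv1, hv2⟩ := pt_inl hv
        have h' : (u : ℕ) % K = (v : ℕ) % K := h
        have hdu := Nat.div_add_mod (u : ℕ) K
        have hdv := Nat.div_add_mod (v : ℕ) K
        have : (u : ℕ) = (v : ℕ) := by
          rw [hu2] at hdu; rw [hv2] at hdv; omega
        exact Fin.ext this)
      (Set.finite_Iio K)
    rwa [← Finset.coe_Iio, Set.ncard_coe_finset, Nat.card_Iio] at h

variable [Fintype F]

lemma WBound (n r K Q : ℕ) (hQ : 0 < Q) (e2 : Fin Q ≃ F × F) (t : Option F) (c : F)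
    (D : ℕ) (hD : ∀ w, w < n - r * K → w / Q < D) :
    {v : Fin n | ∃ P, pt n r K Q hQ e2 v = Sum.inr P ∧ part t P = c}.ncard
      ≤ Fintype.card F * D := by
  classical
  have h := Set.ncard_le_ncard_of_injOn
      (s := {v : Fin n | ∃ P, pt n r K Q hQ e2 v = Sum.inr P ∧ part t P = c})
      (t := ((Finset.univ ×ˢ Finset.Iio D : Finset (F × ℕ)) : Set (F × ℕ)))
      (fun v : Fin n =>
        (fiberMap t (e2 ⟨((v : ℕ) - r * K) % Q, Nat.mod_lt _ hQ⟩), ((v : ℕ) - r * K) / Q))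
      (by
        rintro v ⟨P, hP, hPc⟩
        obtain ⟨hv1, hv2⟩ := pt_inr hP
        simp only [Finset.coe_product, Set.mem_prod, Finset.coe_univ, Set.mem_univ,
          Finset.coe_Iio, Set.mem_Iio, true_and]
        apply hD
        have : r * K ≤ (v : ℕ) := Nat.le_of_not_lt hv1
        exact Nat.sub_lt_sub_right this v.isLt)
      (by
        rintro u ⟨P, hPu, hPcu⟩ v ⟨P', hPv, hPcv⟩ h
        obtain ⟨hu1, hu2⟩ := pt_inr hPu
        obtain ⟨hv1, hv2⟩ := pt_inr hPv
        have h1 := congrArg Prod.fst h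
        have h2 := congrArg Prod.snd h
        simp only at h1 h2
        rw [← hu2, ← hv2] at h1
        have hPP : P = P' := fiberMap_inj hPcu hPcv h1
        rw [hPP] at hu2
        have hmodeq : ((u : ℕ) - r * K) % Q = ((v : ℕ) - r * K) % Q := by
          have := e2.injective (hu2.symm.trans hv2)
          exact congrArg Fin.val this
        have h2' : ((u : ℕ) - r * K) / Q = ((v : ℕ) - r * K) / Q := h2
        have hdu := Nat.div_add_mod ((u : ℕ) - r * K) Q
        have hdv := Nat.div_add_mod ((v : ℕ) - r * K) Q
        have hu1' := Nat.le_of_not_lt hu1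
        have hv1' := Nat.le_of_not_lt hv1
        have hsub : (u : ℕ) - r * K = (v : ℕ) - r * K := by
          rw [← hdu, ← hdv, hmodeq, h2']
        have : (u : ℕ) = (v : ℕ) := by omega
        exact Fin.ext this)
      ((Finset.univ ×ˢ Finset.Iio D).finite_toSet)
  rw [Set.ncard_coe_finset, Finset.card_product, Finset.card_univ, Nat.card_Iio] at h
  exact h

end S14
def IsKConnected {V : Type*} (k : ℕ) (G : SimpleGraph V) : Prop :=
  k < Nat.card V ∧ ∀ S : Set V, S.ncard < k → (G.induce Sᶜ).Connected

def colorGraph (n r : ℕ) (f : Sym2 (Fin n) → Fin r) (i : Fin r) :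
    SimpleGraph (Fin n) where
  Adj a b := a ≠ b ∧ f s(a, b) = i
  symm := ⟨fun a b h => ⟨h.1.symm, by rw [Sym2.eq_swap]; exact h.2⟩⟩
  loopless := ⟨fun a h => h.1 rfl⟩

theorem stmt14 (n r k : ℕ) (hk : 1 ≤ k) (hr : 2 ≤ r) (hn : r * (k - 1) ≤ n)
    (hpp : IsPrimePow (r - 1)) :
    ∃ f : Sym2 (Fin n) → Fin r,
      (∀ (i : Fin r) (H : SimpleGraph (Fin n)) (A : Set (Fin n)),
        H ≤ colorGraph n r f i → IsKConnected k (H.induce A) →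
          (A.ncard : ℝ) ≤ ((n : ℝ) - k + 1) / ((r : ℝ) - 1) + r) ∧
      ((r - 1) ^ 2 ∣ (n - r * (k - 1)) →
        ∀ (i : Fin r) (H : SimpleGraph (Fin n)) (A : Set (Fin n)),
          H ≤ colorGraph n r f i → IsKConnected k (H.induce A) →
            (A.ncard : ℝ) ≤ ((n : ℝ) - k + 1) / ((r : ℝ) - 1)) := by
  classical
  obtain ⟨p, e, hp, he, hpe⟩ := hpp
  have hpn : p.Prime := hp.nat_prime
  haveI := Fact.mk hpn
  set q := r - 1 with hqdef
  have hq2 : 2 ≤ q := by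
    have h2p := hpn.two_le
    calc 2 ≤ p := h2p
    _ ≤ p ^ e := Nat.le_self_pow he.ne' p
    _ = q := hpe
  have hrq : r = q + 1 := by omega
  set F := GaloisField p e with hF
  haveI : Fintype F := Fintype.ofFinite _
  have hcF : Fintype.card F = q := by
    rw [← Nat.card_eq_fintype_card, GaloisField.card (p := p) (n := e) he.ne']
    exact hpe
  set K := k - 1 with hKdef
  set Q := q * q with hQdef
  have hq0 : 0 < q := by omega
  have hQ : 0 < Q := Nat.mul_pos hq0 hq0
  let e2 : Fin Q ≃ F × F := Fintype.equivOfCardEq (by simp [hcF, hQdef])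
  let ιr : Fin r ≃ Option F := Fintype.equivOfCardEq (by simp [hcF, hrq])
  let ptf : Fin n → (Fin r) ⊕ (F × F) := S14.pt n r K Q hQ e2
  let f : Sym2 (Fin n) → Fin r := Sym2.lift ⟨S14.gcol ιr ptf, S14.gcol_symm ιr ptf⟩
  have hf : ∀ u v : Fin n, f s(u, v) = S14.gcol ιr ptf u v := fun u v =>
    Sym2.lift_mk _ u v
  have hm : (n - r * K) + r * K = n := Nat.sub_add_cancel hn
  set m := n - r * K with hmdef
  have key : ∀ D : ℕ, (∀ w, w < m → w / Q < D) →
      ∀ (i : Fin r) (H : SimpleGraph (Fin n)) (A : Set (Fin n)),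
        H ≤ colorGraph n r f i → IsKConnected k (H.induce A) →
        A.ncard ≤ K + q * D := by
    intro D hD i H A hH hKC
    obtain ⟨hcardA, hconnA⟩ := hKC
    have hA : k < A.ncard := by rwa [Nat.card_coe_set_eq] at hcardA
    set t := ιr i with htdef
    set Ci : Set (Fin n) := {v | ptf v = Sum.inl i} with hCidef
    have hCi : Ci.ncard ≤ K := S14.CiBound n r K Q hQ e2 i
    set S : Set ↥A := {a | ptf ↑a = Sum.inl i} with hSdef
    have hSK : S.ncard ≤ K := by
      have hle := Set.ncard_le_ncard_of_injOn (s := S) (t := Ci) (fun a => ↑a)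
        (fun a ha => ha) (Subtype.val_injective.injOn) (Set.toFinite Ci)
      omega
    have hSk : S.ncard < k := lt_of_le_of_lt hSK (by omega)
    have hconn := hconnA S hSk
    have htotal : S.ncard + Sᶜ.ncard = A.ncard := by
      rw [Set.ncard_add_ncard_compl S, Nat.card_coe_set_eq]
    have h2c : 1 < Sᶜ.ncard := by omega
    obtain ⟨a₀, b₀, ha₀, hb₀, hab⟩ := (Set.one_lt_ncard_iff (Set.toFinite _)).mp h2c
    have edge : ∀ a b : ↥(Sᶜ), ((H.induce A).induce Sᶜ).Adj a b →
        ∃ P P', ptf ↑↑a = Sum.inr P ∧ ptf ↑↑b = Sum.inr P' ∧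
          S14.part t P = S14.part t P' := by
      intro a b hab'
      have hadj : H.Adj ↑↑a ↑↑b := hab'
      have hcg := hH hadj
      have hcol : S14.gcol ιr ptf ↑↑a ↑↑b = i := by rw [← hf]; exact hcg.2
      exact S14.gcol_eq a.2 b.2 hcol
    have walkGood : ∀ (a b : ↥(Sᶜ)) (w : ((H.induce A).induce Sᶜ).Walk a b) (c : F),
        (∃ P, ptf ↑↑a = Sum.inr P ∧ S14.part t P = c) →
        (∃ P, ptf ↑↑b = Sum.inr P ∧ S14.part t P = c) := by
      intro a b w
      induction w with
      | nil => exact fun c h => h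
      | cons hadj w ih =>
          intro c hc
          obtain ⟨P, hPa, hPc⟩ := hc
          obtain ⟨P1, P2, h1, h2, h12⟩ := edge _ _ hadj
          have hP1 : P1 = P := Sum.inr.inj (h1.symm.trans hPa)
          exact ih c ⟨P2, h2, by rw [← h12, hP1, hPc]⟩
    obtain ⟨w0⟩ := hconn.preconnected ⟨a₀, ha₀⟩ ⟨b₀, hb₀⟩
    have hne0 : (⟨a₀, ha₀⟩ : ↥(Sᶜ)) ≠ ⟨b₀, hb₀⟩ := by
      intro h; exact hab (congrArg Subtype.val h)
    obtain ⟨c₀, base⟩ : ∃ c₀, ∃ P, ptf ↑a₀ = Sum.inr P ∧ S14.part t P = c₀ := by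
      cases w0 with
      | nil => exact absurd rfl hne0
      | cons hadj w' =>
          obtain ⟨P1, P2, h1, _, _⟩ := edge _ _ hadj
          exact ⟨S14.part t P1, P1, h1, rfl⟩
    have allGood : ∀ x : ↥(Sᶜ), ∃ P, ptf ↑↑x = Sum.inr P ∧ S14.part t P = c₀ := by
      intro x
      obtain ⟨w⟩ := hconn.preconnected ⟨a₀, ha₀⟩ x
      exact walkGood _ _ w c₀ base
    set W : Set (Fin n) := {v | ∃ P, ptf v = Sum.inr P ∧ S14.part t P = c₀} with hWdef
    have hW : W.ncard ≤ q * D := by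
      have hb := S14.WBound n r K Q hQ e2 t c₀ D hD
      rwa [hcF] at hb
    have hsub : A \ Ci ⊆ W := by
      rintro v ⟨hvA, hvCi⟩
      exact allGood ⟨⟨v, hvA⟩, hvCi⟩
    calc A.ncard = (A ∩ Ci).ncard + (A \ Ci).ncard :=
          (Set.ncard_inter_add_ncard_diff_eq_ncard A Ci (Set.toFinite A)).symm
      _ ≤ K + q * D := by
          have h1 : (A ∩ Ci).ncard ≤ K :=
            le_trans (Set.ncard_le_ncard Set.inter_subset_right (Set.toFinite Ci)) hCi
          have h2 : (A \ Ci).ncard ≤ q * D :=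
            le_trans (Set.ncard_le_ncard hsub (Set.toFinite W)) hW
          omega
  -- real number preliminaries
  have hqR : (0 : ℝ) < (q : ℝ) := by exact_mod_cast hq0
  have hrR : ((r : ℝ) - 1) = (q : ℝ) := by
    rw [hrq]; push_cast; ring
  have hKR : ((K : ℕ) : ℝ) = (k : ℝ) - 1 := by
    rw [hKdef]; push_cast [hk]; ring
  have hnR : (n : ℝ) = (m : ℝ) + (r : ℝ) * (K : ℝ) := by
    exact_mod_cast congrArg (Nat.cast (R := ℝ)) hm.symm
  have hrcast : (r : ℝ) = (q : ℝ) + 1 := by rw [hrq]; push_cast; ring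
  have hnkR : (n : ℝ) - k + 1 = (m : ℝ) + (q : ℝ) * (K : ℝ) := by
    rw [hnR, hrcast, hKR]; ring
  have hQR : ((Q : ℕ) : ℝ) = (q : ℝ) * (q : ℝ) := by rw [hQdef]; push_cast; ring
  refine ⟨f, ?_, ?_⟩
  · intro i H A hH hKC
    have hb := key (m / Q + 1)
      (fun w hw => lt_of_le_of_lt (Nat.div_le_div_right hw.le) (Nat.lt_succ_self _))
      i H A hH hKC
    have hbR : (A.ncard : ℝ) ≤ (K : ℝ) + (q : ℝ) * (((m / Q : ℕ) : ℝ) + 1) := by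
      exact_mod_cast hb
    have hdl : ((m / Q : ℕ) : ℝ) ≤ (m : ℝ) / (Q : ℝ) := Nat.cast_div_le
    have hdq : (q : ℝ) * ((m : ℝ) / (Q : ℝ)) = (m : ℝ) / (q : ℝ) := by
      rw [hQR]; field_simp
    rw [hnkR, hrR]
    have hdivq : ((m : ℝ) + (q : ℝ) * (K : ℝ)) / (q : ℝ)
        = (m : ℝ) / (q : ℝ) + (K : ℝ) := by field_simp
    rw [hdivq]
    nlinarith [mul_le_mul_of_nonneg_left hdl (le_of_lt hqR)]
  · intro hdvd i H A hH hKC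
    have hdvd' : Q ∣ m := by
      rw [hQdef, ← pow_two]
      exact hdvd
    have hb := key (m / Q)
      (fun w hw => Nat.div_lt_div_of_lt_of_dvd hdvd' hw)
      i H A hH hKC
    have hbR : (A.ncard : ℝ) ≤ (K : ℝ) + (q : ℝ) * ((m / Q : ℕ) : ℝ) := by
      exact_mod_cast hb
    have hQne : ((Q : ℕ) : ℝ) ≠ 0 := by
      rw [hQR]; positivity
    have hdl : ((m / Q : ℕ) : ℝ) = (m : ℝ) / (Q : ℝ) := by
      rw [Nat.cast_div hdvd' hQne]
    have hdq : (q : ℝ) * ((m : ℝ) / (Q : ℝ)) = (m : ℝ) / (q : ℝ) := by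
      rw [hQR]; field_simp
    rw [hnkR, hrR]
    have hdivq : ((m : ℝ) + (q : ℝ) * (K : ℝ)) / (q : ℝ)
        = (m : ℝ) / (q : ℝ) + (K : ℝ) := by field_simp
    rw [hdivq]
    rw [hdl, hdq] at hbR
    linarith
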